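/- Let S be a finite set with |S| = n. In the network D_SO^S, with source node (∅,∅,∅) and sink node (S,S,∅), let F(D_SO^S) ⊆ ℝ^A be the convex hull of the characteristic vectors χ^{A(P)} of the arc sets A(P) of all source–sink paths P, and let P_SO^S ⊆ ℝ^{S⋆S} be the convex hull of the characteristic vectors x^R of all semiorders R on S. Let π : ℝ^A → ℝ^{S⋆S} be the linear map with π(Φ)_{(i,j)} = Σ { Φ_a : a = ((X,Y,L),(Z,T,M)) ∈ A, i ∈ Y and j ∈ Z \ X }. Then π maps F(D_SO^S) onto P_SO^S, i.e., π(F(D_SO^S)) = P_SO^S. -/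
import Mathlib


open scoped Classical

/-- `L` is a strict linear order on the subset `T` of `S`: it only relates elements of
`T`, and is irreflexive, transitive and complete on `T`. -/
def IsStrictLinearOrderOn {S : Type*} (T : Finset S) (L : S → S → Prop) : Prop :=
  (∀ i j, L i j → i ∈ T ∧ j ∈ T) ∧
  (∀ i, ¬ L i i) ∧
  (∀ i j k, L i j → L j k → L i k) ∧
  (∀ i ∈ T, ∀ j ∈ T, i ≠ j → L i j ∨ L j i)

/-- Nodes of the network `D_SO^S`: triples `(X, Y, L)` with `Y ⊆ X ⊆ S` and `L` a strict
linear order on `X \ Y`. -/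
def SONode (S : Type*) [Fintype S] [DecidableEq S] :=
  {v : Finset S × Finset S × (S → S → Prop) //
    v.2.1 ⊆ v.1 ∧ IsStrictLinearOrderOn (v.1 \ v.2.1) v.2.2}

/-- The arc condition of the network `D_SO^S`.  From a node `(X, Y, L)` there is:
(α) for each `i ∈ S \ X`, an arc to `(X ∪ {i}, Y, L + i)` where `L + i` appends `i`
at the end (as new maximum) of `L`; and (β) if `X \ Y ≠ ∅`, an arc to
`(X, Y ∪ {j}, L − j)` where `j` is the first (minimum) element of `L` and `L − j` is the
restriction of `L` to `(X \ Y) \ {j}`. -/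
def SOArcCond {S : Type*} [Fintype S] [DecidableEq S] (v w : SONode S) : Prop :=
  (∃ i ∉ v.val.1,
      w.val.1 = insert i v.val.1 ∧ w.val.2.1 = v.val.2.1 ∧
      ∀ x y, (w.val.2.2 x y ↔ v.val.2.2 x y ∨ (x ∈ v.val.1 \ v.val.2.1 ∧ y = i))) ∨
  (∃ j ∈ v.val.1 \ v.val.2.1,
      (∀ x ∈ v.val.1 \ v.val.2.1, x ≠ j → v.val.2.2 j x) ∧
      w.val.1 = v.val.1 ∧ w.val.2.1 = insert j v.val.2.1 ∧
      ∀ x y, (w.val.2.2 x y ↔ v.val.2.2 x y ∧ x ≠ j ∧ y ≠ j))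

/-- Arcs of the network `D_SO^S`. -/
def SOArc (S : Type*) [Fintype S] [DecidableEq S] :=
  {a : SONode S × SONode S // SOArcCond a.1 a.2}

noncomputable instance (S : Type*) [Fintype S] [DecidableEq S] : Fintype (SONode S) := by
  unfold SONode; infer_instance

noncomputable instance (S : Type*) [Fintype S] [DecidableEq S] : Fintype (SOArc S) := by
  unfold SOArc; infer_instance

/-- The characteristic vectors `χ^{A(P)}` of the arc sets of all source–sink paths `P`
in `D_SO^S` (from source `(∅,∅,∅)` to sink `(S,S,∅)`). -/
noncomputable def soPathVectors (S : Type*) [Fintype S] [DecidableEq S] :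
    Set (SOArc S → ℝ) :=
  {Φ | ∃ (m : ℕ) (v : Fin (m + 1) → SONode S),
    (v 0).val.1 = ∅ ∧ (v 0).val.2.1 = ∅ ∧ (∀ x y, ¬ (v 0).val.2.2 x y) ∧
    (v (Fin.last m)).val.1 = Finset.univ ∧ (v (Fin.last m)).val.2.1 = Finset.univ ∧
    (∀ x y, ¬ (v (Fin.last m)).val.2.2 x y) ∧
    (∀ k : Fin m, SOArcCond (v k.castSucc) (v k.succ)) ∧
    Φ = fun a => if ∃ k : Fin m, (v k.castSucc, v k.succ) = a.val then 1 else 0}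

/-- The projection `π : ℝ^A → ℝ^{S⋆S}`, with
`π(Φ)_{(i,j)} = Σ { Φ_a : a = ((X,Y,L),(Z,T,M)) ∈ A, i ∈ Y and j ∈ Z \ X }`. -/
noncomputable def soProj (S : Type*) [Fintype S] [DecidableEq S] (Φ : SOArc S → ℝ) :
    {p : S × S // p.1 ≠ p.2} → ℝ :=
  fun p => ∑ a : SOArc S,
    if p.val.1 ∈ a.val.1.val.2.1 ∧ p.val.2 ∈ a.val.2.val.1 ∧ p.val.2 ∉ a.val.1.val.1
    then Φ a else 0

lemma exists_ts {S : Type*} [Fintype S] [DecidableEq S] (R : S → S → Prop)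
    (hirr : ∀ i, ¬ R i i)
    (h2 : ∀ i j i' j', R i j → R i' j' → R i j' ∨ R i' j)
    (h3 : ∀ i i' i'' j, R i i' → R i' i'' → R i j ∨ R j i'') :
    ∃ t s : S → ℕ,
      (∀ i, t i < s i) ∧
      (∀ i j, t j ≠ s i) ∧
      (∀ i j, t i < t j ↔ s i < s j) ∧
      Function.Injective t ∧
      Function.Injective s ∧
      (∀ j, t j < 2 * Fintype.card S) ∧
      (∀ i, s i < 2 * Fintype.card S) ∧
      (∀ i j, R i j ↔ s i < t j) ∧
      (∀ k, k < 2 * Fintype.card S → (∃ j, t j = k) ∨ (∃ i, s i = k)) := by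
  classical
  set n := Fintype.card S with hn_def
  set le : S → S → Prop := fun i j => (∀ k, R k i → R k j) ∧ (∀ k, R j k → R i k)
    with hle_def
  have hle_refl : ∀ i, le i i := fun i => ⟨fun _ h => h, fun _ h => h⟩
  have hle_trans : ∀ i j k, le i j → le j k → le i k := fun i j k ha hb =>
    ⟨fun m hm => hb.1 m (ha.1 m hm), fun m hm => ha.2 m (hb.2 m hm)⟩
  have htot : ∀ i j, le i j ∨ le j i := by
    intro i j
    by_cases hA : le i j
    · exact Or.inl hA
    · right
      rw [hle_def] at hA
      rcases not_and_or.mp hA with hA' | hA'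
      · push_neg at hA'
        obtain ⟨k, hki, hkj⟩ := hA'
        exact ⟨fun m hmj => (h2 m j k i hmj hki).resolve_right hkj,
               fun m him => (h3 k i m j hki him).resolve_left hkj⟩
      · push_neg at hA'
        obtain ⟨k, hjk, hik⟩ := hA'
        exact ⟨fun m hmj => (h3 m j k i hmj hjk).resolve_right hik,
               fun m him => (h2 i m j k him hjk).resolve_left hik⟩
  set e := Fintype.equivFin S with he_def
  set slt : S → S → Prop := fun i j => le i j ∧ (¬ le j i ∨ (e i : ℕ) < (e j : ℕ))
    with hslt_def
  have hslt_trans : ∀ i j k, slt i j → slt j k → slt i k := by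
    rintro i j k ⟨ha, ha'⟩ ⟨hb, hb'⟩
    refine ⟨hle_trans _ _ _ ha hb, ?_⟩
    rcases ha' with ha' | ha'
    · exact Or.inl (fun hki => ha' (hle_trans _ _ _ hb hki))
    · rcases hb' with hb' | hb'
      · exact Or.inl (fun hki => hb' (hle_trans _ _ _ hki ha))
      · exact Or.inr (lt_trans ha' hb')
  have hslt_irrefl : ∀ i, ¬ slt i i := by
    rintro i ⟨h1, h2'⟩
    rcases h2' with h | h
    · exact h (hle_refl i)
    · exact lt_irrefl _ h
  have htrich : ∀ i j, i ≠ j → slt i j ∨ slt j i := by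
    intro i j hne
    have hee : (e i : ℕ) ≠ (e j : ℕ) := fun h => hne (e.injective (Fin.ext h))
    rcases htot i j with h | h
    · by_cases h' : le j i
      · rcases lt_or_gt_of_ne hee with he | he
        · exact Or.inl ⟨h, Or.inr he⟩
        · exact Or.inr ⟨h', Or.inr he⟩
      · exact Or.inl ⟨h, Or.inl h'⟩
    · by_cases h' : le i j
      · rcases lt_or_gt_of_ne hee with he | he
        · exact Or.inl ⟨h', Or.inr he⟩
        · exact Or.inr ⟨h, Or.inr he⟩
      · exact Or.inr ⟨h, Or.inl h'⟩
  have hRslt : ∀ i j, R i j → slt i j := by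
    intro i j hij
    refine ⟨⟨fun k hk => (h3 k i j j hk hij).resolve_right (hirr j),
             fun k hk => (h3 i j k i hij hk).resolve_left (hirr i)⟩, Or.inl ?_⟩
    intro hle
    exact hirr j (hle.2 j hij)
  set r : S → ℕ := fun i => (Finset.univ.filter fun x => slt x i).card with hr_def
  have hr_lt : ∀ i j, slt i j → r i < r j := by
    intro i j hij
    have hsub : (Finset.univ.filter fun x => slt x i) ⊆ (Finset.univ.filter fun x => slt x j) := by
      intro x hx
      exact Finset.mem_filter.mpr ⟨Finset.mem_univ x,
        hslt_trans x i j (Finset.mem_filter.mp hx).2 hij⟩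
    apply Finset.card_lt_card
    rw [Finset.ssubset_iff_of_subset hsub]
    exact ⟨i, Finset.mem_filter.mpr ⟨Finset.mem_univ i, hij⟩,
      fun h => hslt_irrefl i (Finset.mem_filter.mp h).2⟩
  have hr_lt_n : ∀ i, r i < n := by
    intro i
    have h := Finset.card_lt_card (show (Finset.univ.filter fun x => slt x i) ⊂ Finset.univ by
      rw [Finset.ssubset_iff_of_subset (Finset.subset_univ _)]
      exact ⟨i, Finset.mem_univ i, fun h => hslt_irrefl i (Finset.mem_filter.mp h).2⟩)
    rw [Finset.card_univ] at h
    exact h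
  have hr_inj : ∀ x y, r x = r y → x = y := by
    intro x y hxy
    by_contra hne
    rcases htrich x y hne with h | h
    · exact absurd hxy (by have := hr_lt _ _ h; omega)
    · exact absurd hxy (by have := hr_lt _ _ h; omega)
  have hslt_of_rlt : ∀ i j, r i < r j → slt i j := by
    intro i j hr
    have hne : i ≠ j := fun h => by subst h; omega
    rcases htrich i j hne with h | h
    · exact h
    · exact absurd hr (by have := hr_lt _ _ h; omega)
  have hle_of_rle : ∀ i j, r i ≤ r j → le i j := by
    intro i j h
    rcases Nat.lt_or_ge (r i) (r j) with h' | h'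
    · exact (hslt_of_rlt i j h').1
    · have : r i = r j := by omega
      rw [hr_inj i j this]
      exact hle_refl j
  set ρ : S → ℕ := fun i =>
    (insert n ((Finset.univ.filter fun j => R i j).image r)).min'
      (Finset.insert_nonempty _ _) with hρ_def
  have hρ_le_n : ∀ i, ρ i ≤ n := fun i =>
    Finset.min'_le _ _ (Finset.mem_insert_self _ _)
  have hρ_le_R : ∀ i j, R i j → ρ i ≤ r j := fun i j hij =>
    Finset.min'_le _ _ (Finset.mem_insert_of_mem
      (Finset.mem_image_of_mem r (Finset.mem_filter.mpr ⟨Finset.mem_univ j, hij⟩)))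
  have hρ_spec : ∀ i, ρ i = n ∨ ∃ j, R i j ∧ r j = ρ i := by
    intro i
    have h := Finset.min'_mem (insert n ((Finset.univ.filter fun j => R i j).image r))
      (Finset.insert_nonempty _ _)
    rcases Finset.mem_insert.mp h with h' | h'
    · exact Or.inl h'
    · obtain ⟨j, hj, hj'⟩ := Finset.mem_image.mp h'
      exact Or.inr ⟨j, (Finset.mem_filter.mp hj).2, hj'⟩
  have hr_lt_ρ : ∀ i, r i < ρ i := by
    intro i
    have h : r i + 1 ≤ ρ i := by
      apply Finset.le_min'
      intro y hy
      rcases Finset.mem_insert.mp hy with rfl | hy'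
      · have := hr_lt_n i; omega
      · obtain ⟨j, hj, rfl⟩ := Finset.mem_image.mp hy'
        have := hr_lt _ _ (hRslt i j (Finset.mem_filter.mp hj).2)
        omega
    omega
  have hρ_mono : ∀ i j, r i ≤ r j → ρ i ≤ ρ j := by
    intro i j hij
    apply Finset.le_min'
    intro y hy
    rcases Finset.mem_insert.mp hy with rfl | hy'
    · exact hρ_le_n i
    · obtain ⟨k, hk, rfl⟩ := Finset.mem_image.mp hy'
      exact hρ_le_R i k ((hle_of_rle i j hij).2 k (Finset.mem_filter.mp hk).2)
  have hR_iff : ∀ i j, R i j ↔ ρ i ≤ r j := by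
    intro i j
    constructor
    · exact hρ_le_R i j
    · intro h
      rcases hρ_spec i with h' | ⟨j', hj', hr'⟩
      · have := hr_lt_n j; omega
      · exact (hle_of_rle j' j (by omega)).1 i hj'
  set t : S → ℕ := fun j => r j + (Finset.univ.filter fun i => ρ i ≤ r j).card with ht_def
  set s : S → ℕ := fun i => r i + ρ i with hs_def
  have hQ1 : ∀ i j, r j < ρ i → t j < s i := by
    intro i j hlt
    have hcard : (Finset.univ.filter fun i' => ρ i' ≤ r j).card ≤ r i := by
      calc (Finset.univ.filter fun i' => ρ i' ≤ r j).card
          ≤ (Finset.range (r i)).card := by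
            apply Finset.card_le_card_of_injOn r
            · intro x hx
              have hx' := (Finset.mem_filter.mp hx).2
              have hri : r x < r i := by
                by_contra hc
                have := hρ_mono i x (by omega)
                omega
              exact Finset.mem_range.mpr hri
            · intro x _ y _ hxy
              exact hr_inj x y hxy
        _ = r i := Finset.card_range _
    simp only [ht_def, hs_def]
    omega
  have hQ2 : ∀ i j, ρ i ≤ r j → s i < t j := by
    intro i j hle'
    have hsub : insert i (Finset.univ.filter fun x => slt x i) ⊆
        (Finset.univ.filter fun i' => ρ i' ≤ r j) := by
      intro x hx
      rcases Finset.mem_insert.mp hx with rfl | hx'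
      · exact Finset.mem_filter.mpr ⟨Finset.mem_univ x, hle'⟩
      · have hsx := (Finset.mem_filter.mp hx').2
        have hrx : r x ≤ r i := le_of_lt (hr_lt _ _ hsx)
        exact Finset.mem_filter.mpr ⟨Finset.mem_univ x, le_trans (hρ_mono x i hrx) hle'⟩
    have h1 : (insert i (Finset.univ.filter fun x => slt x i)).card = r i + 1 :=
      Finset.card_insert_of_notMem (fun h => hslt_irrefl i (Finset.mem_filter.mp h).2)
    have hcard := Finset.card_le_card hsub
    simp only [ht_def, hs_def]
    omega
  have ht_lt_s : ∀ i, t i < s i := fun i => hQ1 i i (hr_lt_ρ i)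
  have ht_ne_s : ∀ i j, t j ≠ s i := by
    intro i j
    rcases Nat.lt_or_ge (r j) (ρ i) with h | h
    · have := hQ1 i j h; omega
    · have := hQ2 i j h; omega
  have ht_mono : ∀ i j, r i < r j → t i < t j := by
    intro i j h
    have hsub : (Finset.univ.filter fun x => ρ x ≤ r i) ⊆
        (Finset.univ.filter fun x => ρ x ≤ r j) := by
      intro x hx
      have := (Finset.mem_filter.mp hx).2
      exact Finset.mem_filter.mpr ⟨Finset.mem_univ x, by omega⟩
    have := Finset.card_le_card hsub
    simp only [ht_def]
    omega
  have hs_mono : ∀ i j, r i < r j → s i < s j := by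
    intro i j h
    have := hρ_mono i j (le_of_lt h)
    simp only [hs_def]
    omega
  have ht_iff : ∀ i j, t i < t j ↔ r i < r j := by
    intro i j
    constructor
    · intro h
      by_contra hc
      push_neg at hc
      rcases Nat.lt_or_ge (r j) (r i) with h' | h'
      · have := ht_mono j i h'; omega
      · have : r i = r j := by omega
        rw [hr_inj i j this] at h; omega
    · exact ht_mono i j
  have hs_iff : ∀ i j, s i < s j ↔ r i < r j := by
    intro i j
    constructor
    · intro h
      by_contra hc
      push_neg at hc
      rcases Nat.lt_or_ge (r j) (r i) with h' | h'
      · have := hs_mono j i h'; omega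
      · have : r i = r j := by omega
        rw [hr_inj i j this] at h; omega
    · exact hs_mono i j
  have ht_inj : Function.Injective t := by
    intro a b hab
    by_contra hne
    have hrne : r a ≠ r b := fun h => hne (hr_inj a b h)
    rcases Nat.lt_or_ge (r a) (r b) with h | h
    · have := ht_mono a b h; omega
    · have := ht_mono b a (by omega); omega
  have hs_inj : Function.Injective s := by
    intro a b hab
    by_contra hne
    have hrne : r a ≠ r b := fun h => hne (hr_inj a b h)
    rcases Nat.lt_or_ge (r a) (r b) with h | h
    · have := hs_mono a b h; omega
    · have := hs_mono b a (by omega); omega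
  have ht_bound : ∀ j, t j < 2 * n := by
    intro j
    have hcard : (Finset.univ.filter fun i => ρ i ≤ r j).card ≤ r j := by
      calc (Finset.univ.filter fun i => ρ i ≤ r j).card
          ≤ (Finset.range (r j)).card := by
            apply Finset.card_le_card_of_injOn r
            · intro x hx
              have hx' := (Finset.mem_filter.mp hx).2
              have := hr_lt_ρ x
              exact Finset.mem_range.mpr (by omega)
            · intro x _ y _ hxy
              exact hr_inj x y hxy
        _ = r j := Finset.card_range _
    have := hr_lt_n j
    simp only [ht_def]
    omega
  have hs_bound : ∀ i, s i < 2 * n := by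
    intro i
    have := hr_lt_n i
    have := hρ_le_n i
    simp only [hs_def]
    omega
  have hR_ts : ∀ i j, R i j ↔ s i < t j := by
    intro i j
    rw [hR_iff]
    constructor
    · exact hQ2 i j
    · intro h
      by_contra hc
      push_neg at hc
      have := hQ1 i j (by omega)
      omega
  have hsurj : ∀ k, k < 2 * n → (∃ j, t j = k) ∨ (∃ i, s i = k) := by
    intro k hk
    have hcard_t : (Finset.univ.image t).card = n := by
      rw [Finset.card_image_of_injective _ ht_inj, Finset.card_univ]
    have hcard_s : (Finset.univ.image s).card = n := by
      rw [Finset.card_image_of_injective _ hs_inj, Finset.card_univ]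
    have hdisj : Disjoint (Finset.univ.image t) (Finset.univ.image s) := by
      rw [Finset.disjoint_left]
      intro a ha hb
      obtain ⟨j, _, rfl⟩ := Finset.mem_image.mp ha
      obtain ⟨i, _, hi⟩ := Finset.mem_image.mp hb
      exact ht_ne_s i j hi.symm
    have hsub : (Finset.univ.image t) ∪ (Finset.univ.image s) ⊆ Finset.range (2 * n) := by
      intro a ha
      rcases Finset.mem_union.mp ha with h | h
      · obtain ⟨j, _, rfl⟩ := Finset.mem_image.mp h
        exact Finset.mem_range.mpr (ht_bound j)
      · obtain ⟨i, _, rfl⟩ := Finset.mem_image.mp h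
        exact Finset.mem_range.mpr (hs_bound i)
    have heq : (Finset.univ.image t) ∪ (Finset.univ.image s) = Finset.range (2 * n) := by
      apply Finset.eq_of_subset_of_card_le hsub
      rw [Finset.card_range, Finset.card_union_of_disjoint hdisj, hcard_t, hcard_s]
      omega
    have hmem : k ∈ (Finset.univ.image t) ∪ (Finset.univ.image s) := by
      rw [heq]; exact Finset.mem_range.mpr hk
    rcases Finset.mem_union.mp hmem with h | h
    · obtain ⟨j, _, hj⟩ := Finset.mem_image.mp h
      exact Or.inl ⟨j, hj⟩
    · obtain ⟨i, _, hi⟩ := Finset.mem_image.mp h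
      exact Or.inr ⟨i, hi⟩
  exact ⟨t, s, ht_lt_s, ht_ne_s, fun i j => (ht_iff i j).trans (hs_iff i j).symm,
    ht_inj, hs_inj, ht_bound, hs_bound, hR_ts, hsurj⟩

lemma soPath_forward {S : Type*} [Fintype S] [DecidableEq S] {Φ : SOArc S → ℝ}
    (h : Φ ∈ soPathVectors S) :
    ∃ R : S → S → Prop,
      ((∀ i, ¬ R i i) ∧
        (∀ i j i' j', R i j → R i' j' → R i j' ∨ R i' j) ∧
        (∀ i i' i'' j, R i i' → R i' i'' → R i j ∨ R j i'')) ∧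
      soProj S Φ = fun p => if R p.val.1 p.val.2 then 1 else 0 := by
  obtain ⟨m, v, hX0, hY0, hL0, hXm, hYm, hLm, harc, hΦ⟩ := h
  subst hΦ
  set u : ℕ → SONode S := fun k => v ⟨min k m, Nat.lt_succ_of_le (min_le_right k m)⟩
    with hu_def
  have hufin : ∀ k : Fin (m + 1), u k.val = v k := by
    intro k
    simp only [hu_def]
    congr 1
    exact Fin.ext (Nat.min_eq_left (Nat.lt_succ_iff.mp k.isLt))
  have hucs : ∀ k : Fin m, u k.val = v k.castSucc := by
    intro k
    have := hufin k.castSucc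
    simpa using this
  have husucc : ∀ k : Fin m, u (k.val + 1) = v k.succ := by
    intro k
    have := hufin k.succ
    simpa using this
  have hum : ∀ k, m ≤ k → u k = v (Fin.last m) := by
    intro k hk
    simp only [hu_def]
    congr 1
    exact Fin.ext (by simp [Fin.last, Nat.min_eq_right hk])
  set XN : ℕ → Finset S := fun k => (u k).val.1 with hXN_def
  set YN : ℕ → Finset S := fun k => (u k).val.2.1 with hYN_def
  set LN : ℕ → S → S → Prop := fun k => (u k).val.2.2 with hLN_def
  have hu0 : u 0 = v 0 := hufin 0
  have harc' : ∀ k, k < m → SOArcCond (u k) (u (k + 1)) := by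
    intro k hk
    rw [show u k = v (⟨k, hk⟩ : Fin m).castSucc from hucs ⟨k, hk⟩,
      show u (k + 1) = v (⟨k, hk⟩ : Fin m).succ from husucc ⟨k, hk⟩]
    exact harc ⟨k, hk⟩
  -- monotonicity
  have hXstep : ∀ k, XN k ⊆ XN (k + 1) := by
    intro k
    by_cases hk : k < m
    · rcases harc' k hk with ⟨i, _, hw1, _⟩ | ⟨j, _, _, hw1, _⟩
      · rw [show XN (k+1) = insert i (XN k) from hw1]
        exact Finset.subset_insert _ _
      · rw [show XN (k+1) = XN k from hw1]
    · have h1 : u (k + 1) = u k := by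
        rw [hum k (le_of_not_gt hk), hum (k+1) (by omega)]
      rw [show XN (k+1) = XN k by simp only [hXN_def, h1]]
  have hYstep : ∀ k, YN k ⊆ YN (k + 1) := by
    intro k
    by_cases hk : k < m
    · rcases harc' k hk with ⟨i, _, _, hw2, _⟩ | ⟨j, _, _, _, hw2, _⟩
      · rw [show YN (k+1) = YN k from hw2]
      · rw [show YN (k+1) = insert j (YN k) from hw2]
        exact Finset.subset_insert _ _
    · have h1 : u (k + 1) = u k := by
        rw [hum k (le_of_not_gt hk), hum (k+1) (by omega)]
      rw [show YN (k+1) = YN k by simp only [hYN_def, h1]]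
  have hXmono : ∀ k l, k ≤ l → XN k ⊆ XN l := by
    intro k l h
    induction h with
    | refl => exact Finset.Subset.rfl
    | step h ih => exact ih.trans (hXstep _)
  have hYmono : ∀ k l, k ≤ l → YN k ⊆ YN l := by
    intro k l h
    induction h with
    | refl => exact Finset.Subset.rfl
    | step h ih => exact ih.trans (hYstep _)
  have hXNm : XN m = Finset.univ := by
    simp only [hXN_def, hum m le_rfl, hXm]
  have hYNm : YN m = Finset.univ := by
    simp only [hYN_def, hum m le_rfl, hYm]
  have hXN0 : XN 0 = ∅ := by simp only [hXN_def, hu0, hX0]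
  have hYN0 : YN 0 = ∅ := by simp only [hYN_def, hu0, hY0]
  have hXex : ∀ j : S, ∃ k, j ∈ XN k := fun j => ⟨m, by rw [hXNm]; exact Finset.mem_univ j⟩
  have hYex : ∀ i : S, ∃ k, i ∈ YN k := fun i => ⟨m, by rw [hYNm]; exact Finset.mem_univ i⟩
  set tN : S → ℕ := fun j => Nat.find (hXex j) with htN_def
  set sN : S → ℕ := fun i => Nat.find (hYex i) with hsN_def
  have htX : ∀ j, j ∈ XN (tN j) := fun j => Nat.find_spec (hXex j)
  have hsY : ∀ i, i ∈ YN (sN i) := fun i => Nat.find_spec (hYex i)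
  have htmin : ∀ j k, j ∈ XN k → tN j ≤ k := fun j k h => Nat.find_le h
  have hsmin : ∀ i k, i ∈ YN k → sN i ≤ k := fun i k h => Nat.find_le h
  have htpos : ∀ j, 0 < tN j := by
    intro j
    rcases Nat.eq_zero_or_pos (tN j) with h | h
    swap
    · exact h
    · exfalso; have := htX j; rw [h, hXN0] at this; exact absurd this (Finset.notMem_empty j)
  have hspos : ∀ i, 0 < sN i := by
    intro i
    rcases Nat.eq_zero_or_pos (sN i) with h | h
    swap
    · exact h
    · exfalso; have := hsY i; rw [h, hYN0] at this; exact absurd this (Finset.notMem_empty i)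
  have htle : ∀ j, tN j ≤ m := fun j => htmin j m (by rw [hXNm]; exact Finset.mem_univ j)
  have hsle : ∀ i, sN i ≤ m := fun i => hsmin i m (by rw [hYNm]; exact Finset.mem_univ i)
  have htnot : ∀ j k, k < tN j → j ∉ XN k := fun j k h => Nat.find_min (hXex j) h
  have hsnot : ∀ i k, k < sN i → i ∉ YN k := fun i k h => Nat.find_min (hYex i) h
  have hIns : ∀ j k, j ∈ XN (k + 1) → j ∉ XN k → tN j = k + 1 := by
    intro j k h1 h0
    have h2 : ¬ tN j ≤ k := fun hle => h0 (hXmono _ _ hle (htX j))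
    have h3 := htmin j (k + 1) h1
    omega
  have hYsubX : ∀ k, YN k ⊆ XN k := fun k => (u k).prop.1
  -- removal step structure
  have hRemStep : ∀ i k, k < m → i ∈ YN (k + 1) → i ∉ YN k →
      i ∈ XN k ∧ (∀ x, x ∈ XN k → x ∉ YN k → x ≠ i → LN k i x) := by
    intro i k hk h1 h0
    rcases harc' k hk with ⟨i', _, _, hw2, _⟩ | ⟨j, hj, hmin, _, hw2, _⟩
    · rw [show YN (k+1) = YN k from hw2] at h1; exact absurd h1 h0
    · have hij : i = j := by
        have : i ∈ insert j (YN k) := by rw [← hw2]; exact h1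
        rcases Finset.mem_insert.mp this with h | h
        · exact h
        · exact absurd h h0
      subst hij
      have hiX : i ∈ XN k := (Finset.mem_sdiff.mp hj).1
      refine ⟨hiX, ?_⟩
      intro x hx1 hx2 hx3
      exact hmin x (Finset.mem_sdiff.mpr ⟨hx1, hx2⟩) hx3
  -- weak invariant: L respects insertion times
  have hInv : ∀ k x y, LN k x y → tN x < tN y := by
    intro k
    induction k with
    | zero =>
      intro x y hxy
      exact absurd (by simpa only [hLN_def, hu0] using hxy) (hL0 x y)
    | succ k ih =>
      by_cases hk : k < m
      · intro x y hxy
        rcases harc' k hk with ⟨i, hi, hw1, _, hw3⟩ | ⟨j, _, _, _, _, hw3⟩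
        · rcases (hw3 x y).mp hxy with h | ⟨hx, rfl⟩
          · exact ih x y h
          · have hxk : tN x ≤ k := htmin _ _ (Finset.mem_sdiff.mp hx).1
            have hik : tN y = k + 1 := hIns y k
              (by rw [show XN (k+1) = insert y (XN k) from hw1]; exact Finset.mem_insert_self _ _)
              hi
            omega
        · exact ih x y ((hw3 x y).mp hxy).1
      · intro x y hxy
        have h1 : u (k + 1) = v (Fin.last m) := hum (k+1) (by omega)
        exact absurd (by simpa only [hLN_def, h1] using hxy) (hLm x y)
  -- FIFO
  have hFIFO : ∀ a b, tN a < tN b → sN a < sN b := by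
    intro a b h
    by_contra hc
    push_neg at hc
    have hb0 : 0 < sN b := hspos b
    have hk1 : sN b = (sN b - 1) + 1 := by omega
    set k := sN b - 1 with hk_def
    have hkm : k < m := by have := hsle b; omega
    have hbY1 : b ∈ YN (k + 1) := by rw [← hk1]; exact hsY b
    have hbY0 : b ∉ YN k := hsnot b k (by omega)
    obtain ⟨hbX, hminL⟩ := hRemStep b k hkm hbY1 hbY0
    have htbk : tN b ≤ k := htmin b k hbX
    have haX : a ∈ XN k := hXmono _ _ (by omega : tN a ≤ k) (htX a)
    have haY : a ∉ YN k := by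
      intro hmem
      have := hsmin a k hmem
      omega
    have hab : a ≠ b := by rintro rfl; omega
    have := hInv k b a (hminL a haX haY hab)
    omega
  refine ⟨fun i j => sN i < tN j, ⟨?_, ?_, ?_⟩, ?_⟩
  · -- irreflexive
    intro i hi
    have h1 : i ∈ XN (sN i) := hYsubX _ (hsY i)
    have := htmin i (sN i) h1
    omega
  · intro i j i' j' h1 h2
    omega
  · intro i i' i'' j h1 h2
    by_cases hc : sN i < tN j
    · exact Or.inl hc
    · push_neg at hc
      have : tN j < tN i' := by omega
      have := hFIFO j i' this
      omega
  · -- value computation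
    funext p
    obtain ⟨⟨i, j⟩, hij⟩ := p
    simp only [soProj]
    by_cases hR : sN i < tN j
    · rw [if_pos hR]
      set k₀ := tN j - 1 with hk₀_def
      have hk₀m : k₀ < m := by have := htle j; have := htpos j; omega
      have hjX1 : j ∈ XN (k₀ + 1) := by
        rw [show k₀ + 1 = tN j by have := htpos j; omega]; exact htX j
      have hjX0 : j ∉ XN k₀ := htnot j k₀ (by have := htpos j; omega)
      have hiY : i ∈ YN k₀ := hYmono _ _ (by omega : sN i ≤ k₀) (hsY i)
      set a₀ : SOArc S := ⟨(u k₀, u (k₀ + 1)), harc' k₀ hk₀m⟩ with ha₀_def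
      rw [Finset.sum_eq_single_of_mem a₀ (Finset.mem_univ a₀)]
      · rw [if_pos ⟨hiY, hjX1, hjX0⟩, if_pos]
        exact ⟨⟨k₀, hk₀m⟩, by
          rw [← hucs ⟨k₀, hk₀m⟩, ← husucc ⟨k₀, hk₀m⟩]⟩
      · intro b _ hb
        by_cases hC : (i ∈ b.val.1.val.2.1 ∧ j ∈ b.val.2.val.1 ∧ j ∉ b.val.1.val.1)
        · rw [if_pos hC]
          by_cases hD : ∃ k : Fin m, (v k.castSucc, v k.succ) = b.val
          · exfalso
            obtain ⟨k, hk⟩ := hD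
            have hbv : b.val = (u k.val, u (k.val + 1)) := by
              rw [← hk, hucs k, husucc k]
            have hj1 : j ∈ XN (k.val + 1) := by
              have := hC.2.1; rw [hbv] at this; exact this
            have hj0 : j ∉ XN k.val := by
              have := hC.2.2; rw [hbv] at this; exact this
            have hkk : k.val = k₀ := by
              have := hIns j k.val hj1 hj0; omega
            apply hb
            apply Subtype.ext
            rw [hbv, hkk, ha₀_def]
          · rw [if_neg hD]
        · rw [if_neg hC]
    · rw [if_neg hR]
      apply Finset.sum_eq_zero
      intro b _
      by_cases hC : (i ∈ b.val.1.val.2.1 ∧ j ∈ b.val.2.val.1 ∧ j ∉ b.val.1.val.1)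
      · rw [if_pos hC]
        by_cases hD : ∃ k : Fin m, (v k.castSucc, v k.succ) = b.val
        · exfalso
          obtain ⟨k, hk⟩ := hD
          have hbv : b.val = (u k.val, u (k.val + 1)) := by
            rw [← hk, hucs k, husucc k]
          have hj1 : j ∈ XN (k.val + 1) := by
            have := hC.2.1; rw [hbv] at this; exact this
          have hj0 : j ∉ XN k.val := by
            have := hC.2.2; rw [hbv] at this; exact this
          have hiY : i ∈ b.val.1.val.2.1 := hC.1
          have hiY' : i ∈ YN k.val := by rw [hbv] at hiY; exact hiY
          have h1 := hsmin i k.val hiY'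
          have h2 := hIns j k.val hj1 hj0
          omega
        · rw [if_neg hD]
      · rw [if_neg hC]

lemma soPath_backward {S : Type*} [Fintype S] [DecidableEq S] (R : S → S → Prop)
    (hirr : ∀ i, ¬ R i i)
    (h2 : ∀ i j i' j', R i j → R i' j' → R i j' ∨ R i' j)
    (h3 : ∀ i i' i'' j, R i i' → R i' i'' → R i j ∨ R j i'') :
    ∃ Φ ∈ soPathVectors S,
      soProj S Φ = fun p => if R p.val.1 p.val.2 then 1 else 0 := by
  classical
  obtain ⟨t, s, hts, htns, htsord, htinj, hsinj, htb, hsb, hRts, hsurj⟩ :=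
    exists_ts R hirr h2 h3
  set n := Fintype.card S with hn_def
  have hnode : ∀ k : ℕ,
      ((Finset.univ.filter fun i => s i < k) ⊆ (Finset.univ.filter fun i => t i < k)) ∧
      IsStrictLinearOrderOn
        ((Finset.univ.filter fun i => t i < k) \ (Finset.univ.filter fun i => s i < k))
        (fun x y => (t x < k ∧ ¬ s x < k) ∧ (t y < k ∧ ¬ s y < k) ∧ t x < t y) := by
    intro k
    constructor
    · intro i hi
      have h1 := (Finset.mem_filter.mp hi).2
      have h2' := hts i
      exact Finset.mem_filter.mpr ⟨Finset.mem_univ i, by omega⟩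
    · refine ⟨?_, ?_, ?_, ?_⟩
      · rintro x y ⟨⟨hx1, hx2⟩, ⟨hy1, hy2⟩, _⟩
        refine ⟨Finset.mem_sdiff.mpr ⟨Finset.mem_filter.mpr ⟨Finset.mem_univ x, hx1⟩, ?_⟩,
                Finset.mem_sdiff.mpr ⟨Finset.mem_filter.mpr ⟨Finset.mem_univ y, hy1⟩, ?_⟩⟩
        · intro hmem; exact hx2 (Finset.mem_filter.mp hmem).2
        · intro hmem; exact hy2 (Finset.mem_filter.mp hmem).2
      · rintro x ⟨_, _, h⟩; exact lt_irrefl _ h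
      · rintro x y z ⟨hx, hy, hxy⟩ ⟨_, hz, hyz⟩; exact ⟨hx, hz, lt_trans hxy hyz⟩
      · intro x hx y hy hne
        rw [Finset.mem_sdiff, Finset.mem_filter] at hx hy
        have hx2 : ¬ s x < k := fun h => hx.2 (Finset.mem_filter.mpr ⟨Finset.mem_univ x, h⟩)
        have hy2 : ¬ s y < k := fun h => hy.2 (Finset.mem_filter.mpr ⟨Finset.mem_univ y, h⟩)
        have htne : t x ≠ t y := fun h => hne (htinj h)
        rcases lt_or_gt_of_ne htne with h | h
        · exact Or.inl ⟨⟨hx.1.2, hx2⟩, ⟨hy.1.2, hy2⟩, h⟩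
        · exact Or.inr ⟨⟨hy.1.2, hy2⟩, ⟨hx.1.2, hx2⟩, h⟩
  set V : ℕ → SONode S := fun k =>
    ⟨(Finset.univ.filter fun i => t i < k, Finset.univ.filter fun i => s i < k,
      fun x y => (t x < k ∧ ¬ s x < k) ∧ (t y < k ∧ ¬ s y < k) ∧ t x < t y),
      hnode k⟩ with hV_def
  have hV1 : ∀ k, (V k).val.1 = Finset.univ.filter fun i => t i < k := fun k => rfl
  have hV2 : ∀ k, (V k).val.2.1 = Finset.univ.filter fun i => s i < k := fun k => rfl
  have hV3 : ∀ k, (V k).val.2.2 =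
      fun x y => (t x < k ∧ ¬ s x < k) ∧ (t y < k ∧ ¬ s y < k) ∧ t x < t y := fun k => rfl
  have harcV : ∀ k, k < 2 * n → SOArcCond (V k) (V (k + 1)) := by
    intro k hk
    rcases hsurj k hk with ⟨j₀, hj₀⟩ | ⟨i₀, hi₀⟩
    · left
      refine ⟨j₀, ?_, ?_, ?_, ?_⟩
      · rw [hV1]
        intro hmem
        have := (Finset.mem_filter.mp hmem).2
        omega
      · rw [hV1, hV1]
        apply Finset.ext
        intro x
        rw [Finset.mem_insert, Finset.mem_filter, Finset.mem_filter]
        simp only [Finset.mem_univ, true_and]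
        constructor
        · intro hx
          by_cases hxe : x = j₀
          · exact Or.inl hxe
          · right
            have : t x ≠ k := fun h => hxe (htinj (by omega : t x = t j₀))
            omega
        · rintro (rfl | hx) <;> omega
      · rw [hV2, hV2]
        apply Finset.ext
        intro x
        rw [Finset.mem_filter, Finset.mem_filter]
        simp only [Finset.mem_univ, true_and]
        have : s x ≠ k := fun h => htns x j₀ (by omega)
        omega
      · intro x y
        rw [hV3, hV3, hV1, hV2]
        simp only [Finset.mem_sdiff, Finset.mem_filter, Finset.mem_univ, true_and]
        constructor
        · rintro ⟨⟨hx1, hx2⟩, ⟨hy1, hy2⟩, hxy⟩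
          by_cases hy : y = j₀
          · subst hy
            right
            exact ⟨⟨by omega, fun h => hx2 (by omega)⟩, rfl⟩
          · left
            have hty : t y ≠ k := fun h => hy (htinj (by omega : t y = t j₀))
            refine ⟨⟨by omega, fun h => hx2 (by omega)⟩,
                    ⟨by omega, fun h => hy2 (by omega)⟩, hxy⟩
        · rintro (⟨⟨hx1, hx2⟩, ⟨hy1, hy2⟩, hxy⟩ | ⟨⟨hx1, hx2⟩, hyeq⟩)
          · have hsx : s x ≠ k := fun h => htns x j₀ (by omega)
            have hsy : s y ≠ k := fun h => htns y j₀ (by omega)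
            exact ⟨⟨by omega, by omega⟩, ⟨by omega, by omega⟩, hxy⟩
          · have hty : t y = k := by rw [hyeq, hj₀]
            have hsy : t y < s y := hts y
            have hsx : s x ≠ k := fun h => htns x j₀ (by omega)
            exact ⟨⟨by omega, by omega⟩, ⟨by omega, by omega⟩, by omega⟩
    · right
      refine ⟨i₀, ?_, ?_, ?_, ?_, ?_⟩
      · rw [hV1, hV2]
        rw [Finset.mem_sdiff, Finset.mem_filter]
        refine ⟨⟨Finset.mem_univ i₀, by have := hts i₀; omega⟩, ?_⟩
        intro hmem
        have := (Finset.mem_filter.mp hmem).2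
        omega
      · intro x hx hxne
        rw [hV1, hV2] at hx
        rw [Finset.mem_sdiff, Finset.mem_filter] at hx
        have hx2 : ¬ s x < k := fun h => hx.2 (Finset.mem_filter.mpr ⟨Finset.mem_univ x, h⟩)
        have hsx : s x ≠ k := fun h => hxne (hsinj (by omega : s x = s i₀))
        have hsi : s i₀ < s x := by omega
        have hti : t i₀ < t x := (htsord i₀ x).mpr hsi
        rw [hV3]
        exact ⟨⟨by have := hts i₀; omega, by omega⟩, ⟨hx.1.2, hx2⟩, hti⟩
      · rw [hV1, hV1]
        apply Finset.ext
        intro x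
        rw [Finset.mem_filter, Finset.mem_filter]
        simp only [Finset.mem_univ, true_and]
        have : t x ≠ k := fun h => htns i₀ x (by omega)
        omega
      · rw [hV2, hV2]
        apply Finset.ext
        intro x
        rw [Finset.mem_insert, Finset.mem_filter, Finset.mem_filter]
        simp only [Finset.mem_univ, true_and]
        constructor
        · intro hx
          by_cases hxe : x = i₀
          · exact Or.inl hxe
          · right
            have : s x ≠ k := fun h => hxe (hsinj (by omega : s x = s i₀))
            omega
        · rintro (rfl | hx) <;> omega
      · intro x y
        rw [hV3, hV3]
        constructor
        · rintro ⟨⟨hx1, hx2⟩, ⟨hy1, hy2⟩, hxy⟩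
          have htx : t x ≠ k := fun h => htns i₀ x (by omega)
          have hty : t y ≠ k := fun h => htns i₀ y (by omega)
          have hxne : x ≠ i₀ := by rintro rfl; exact hx2 (by omega)
          have hyne : y ≠ i₀ := by rintro rfl; exact hy2 (by omega)
          exact ⟨⟨⟨by omega, fun h => hx2 (by omega)⟩,
                  ⟨by omega, fun h => hy2 (by omega)⟩, hxy⟩, hxne, hyne⟩
        · rintro ⟨⟨⟨hx1, hx2⟩, ⟨hy1, hy2⟩, hxy⟩, hxne, hyne⟩
          have hsx : s x ≠ k := fun h => hxne (hsinj (by omega : s x = s i₀))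
          have hsy : s y ≠ k := fun h => hyne (hsinj (by omega : s y = s i₀))
          exact ⟨⟨by omega, by omega⟩, ⟨by omega, by omega⟩, hxy⟩
  set v : Fin (2 * n + 1) → SONode S := fun k => V (k : ℕ) with hv_def
  refine ⟨fun a => if ∃ k : Fin (2 * n), (v k.castSucc, v k.succ) = a.val then 1 else 0,
    ⟨2 * n, v, ?_, ?_, ?_, ?_, ?_, ?_, ?_, rfl⟩, ?_⟩
  · show (V ((0 : Fin (2 * n + 1)) : ℕ)).val.1 = ∅
    rw [show ((0 : Fin (2 * n + 1)) : ℕ) = 0 from rfl, hV1]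
    apply Finset.eq_empty_of_forall_notMem
    intro x hx
    have := (Finset.mem_filter.mp hx).2
    omega
  · show (V ((0 : Fin (2 * n + 1)) : ℕ)).val.2.1 = ∅
    rw [show ((0 : Fin (2 * n + 1)) : ℕ) = 0 from rfl, hV2]
    apply Finset.eq_empty_of_forall_notMem
    intro x hx
    have := (Finset.mem_filter.mp hx).2
    omega
  · show ∀ x y, ¬ (V ((0 : Fin (2 * n + 1)) : ℕ)).val.2.2 x y
    rw [show ((0 : Fin (2 * n + 1)) : ℕ) = 0 from rfl]
    intro x y
    rw [hV3]
    rintro ⟨⟨h, _⟩, _⟩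
    omega
  · show (V ((Fin.last (2 * n)) : ℕ)).val.1 = Finset.univ
    rw [show ((Fin.last (2 * n)) : ℕ) = 2 * n from rfl, hV1]
    apply Finset.eq_univ_of_forall
    intro x
    exact Finset.mem_filter.mpr ⟨Finset.mem_univ x, htb x⟩
  · show (V ((Fin.last (2 * n)) : ℕ)).val.2.1 = Finset.univ
    rw [show ((Fin.last (2 * n)) : ℕ) = 2 * n from rfl, hV2]
    apply Finset.eq_univ_of_forall
    intro x
    exact Finset.mem_filter.mpr ⟨Finset.mem_univ x, hsb x⟩
  · show ∀ x y, ¬ (V ((Fin.last (2 * n)) : ℕ)).val.2.2 x y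
    rw [show ((Fin.last (2 * n)) : ℕ) = 2 * n from rfl]
    intro x y
    rw [hV3]
    rintro ⟨⟨_, h⟩, _⟩
    exact h (hsb x)
  · intro k
    show SOArcCond (V ((k.castSucc : Fin (2 * n + 1)) : ℕ)) (V ((k.succ : Fin (2 * n + 1)) : ℕ))
    rw [show ((k.castSucc : Fin (2 * n + 1)) : ℕ) = k.val from rfl,
        show ((k.succ : Fin (2 * n + 1)) : ℕ) = k.val + 1 from rfl]
    exact harcV k.val k.isLt
  · funext p
    obtain ⟨⟨i, j⟩, hij⟩ := p
    simp only [soProj]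
    by_cases hR : R i j
    · rw [if_pos hR]
      have hk₀ : t j < 2 * n := htb j
      set a₀ : SOArc S := ⟨(V (t j), V (t j + 1)), harcV (t j) hk₀⟩ with ha₀_def
      rw [Finset.sum_eq_single_of_mem a₀ (Finset.mem_univ a₀)]
      · have hC : i ∈ a₀.val.1.val.2.1 ∧ j ∈ a₀.val.2.val.1 ∧ j ∉ a₀.val.1.val.1 := by
          refine ⟨?_, ?_, ?_⟩
          · show i ∈ (V (t j)).val.2.1
            rw [hV2]
            exact Finset.mem_filter.mpr ⟨Finset.mem_univ i, (hRts i j).mp hR⟩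
          · show j ∈ (V (t j + 1)).val.1
            rw [hV1]
            exact Finset.mem_filter.mpr ⟨Finset.mem_univ j, by omega⟩
          · show j ∉ (V (t j)).val.1
            rw [hV1]
            intro hmem
            have := (Finset.mem_filter.mp hmem).2
            omega
        have hD : ∃ k : Fin (2 * n), (v k.castSucc, v k.succ) = a₀.val :=
          ⟨⟨t j, hk₀⟩, rfl⟩
        rw [if_pos hC, if_pos hD]
      · intro b _ hb
        split_ifs with hC hD
        · exfalso
          obtain ⟨k, hk⟩ := hD
          have hbv : b.val = (V k.val, V (k.val + 1)) := by
            rw [← hk, hv_def]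
            rfl
          have hj1 : t j < k.val + 1 := by
            have hmem := hC.2.1
            rw [hbv] at hmem
            have hmem' : j ∈ (V (k.val + 1)).val.1 := hmem
            rw [hV1] at hmem'
            exact (Finset.mem_filter.mp hmem').2
          have hj0 : ¬ t j < k.val := by
            have hmem := hC.2.2
            rw [hbv] at hmem
            intro hlt
            have hmem' : j ∈ (V k.val).val.1 := by
              rw [hV1]
              exact Finset.mem_filter.mpr ⟨Finset.mem_univ j, hlt⟩
            exact hmem hmem'
          have hkk : k.val = t j := by omega
          exact hb (Subtype.ext (by rw [hbv, hkk, ha₀_def]))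
        · rfl
        · rfl
    · rw [if_neg hR]
      apply Finset.sum_eq_zero
      intro b _
      split_ifs with hC hD
      · exfalso
        obtain ⟨k, hk⟩ := hD
        have hbv : b.val = (V k.val, V (k.val + 1)) := by
          rw [← hk, hv_def]
          rfl
        have hj1 : t j < k.val + 1 := by
          have hmem := hC.2.1
          rw [hbv] at hmem
          have hmem' : j ∈ (V (k.val + 1)).val.1 := hmem
          rw [hV1] at hmem'
          exact (Finset.mem_filter.mp hmem').2
        have hj0 : ¬ t j < k.val := by
          have hmem := hC.2.2
          rw [hbv] at hmem
          intro hlt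
          have hmem' : j ∈ (V k.val).val.1 := by
            rw [hV1]
            exact Finset.mem_filter.mpr ⟨Finset.mem_univ j, hlt⟩
          exact hmem hmem'
        have hkk : k.val = t j := by omega
        have hiY : i ∈ (V k.val).val.2.1 := by
          have hmem := hC.1
          rw [hbv] at hmem
          exact hmem
        rw [hV2] at hiY
        have hsi : s i < k.val := (Finset.mem_filter.mp hiY).2
        exact hR ((hRts i j).mpr (by omega))
      · rfl
      · rfl

/-- The projection `π` maps the flow polytope `F(D_SO^S)` (the convex hull of the
characteristic vectors of arc sets of source–sink paths) onto the semiorder polytope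
`P_SO^S` (the convex hull of the characteristic vectors of all semiorders on `S`). -/
theorem soProj_image_flowPolytope (S : Type*) [Fintype S] [DecidableEq S] :
    soProj S '' convexHull ℝ (soPathVectors S) =
      convexHull ℝ
        {x : {p : S × S // p.1 ≠ p.2} → ℝ |
          ∃ R : S → S → Prop,
            ((∀ i, ¬ R i i) ∧
              (∀ i j i' j', R i j → R i' j' → R i j' ∨ R i' j) ∧
              (∀ i i' i'' j, R i i' → R i' i'' → R i j ∨ R j i'')) ∧
            x = fun p => if R p.val.1 p.val.2 then 1 else 0} := by
  have hlin : IsLinearMap ℝ (soProj S) := by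
    constructor
    · intro Φ Ψ
      funext p
      simp only [soProj, Pi.add_apply]
      rw [← Finset.sum_add_distrib]
      apply Finset.sum_congr rfl
      intro a _
      split_ifs <;> simp
    · intro c Φ
      funext p
      simp only [soProj, Pi.smul_apply, smul_eq_mul, Finset.mul_sum]
      apply Finset.sum_congr rfl
      intro a _
      split_ifs <;> simp
  rw [hlin.image_convexHull]
  congr 1
  ext x
  constructor
  · rintro ⟨Φ, hΦ, rfl⟩
    exact soPath_forward hΦ
  · rintro ⟨R, ⟨hirr, ha2, ha3⟩, rfl⟩
    obtain ⟨Φ, hΦ, hval⟩ := soPath_backward R hirr ha2 ha3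
    exact ⟨Φ, hΦ, hval⟩
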